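/- Let X be a CAT(0) metric space, r : [0, ∞) → X a geodesic ray with o = r(0), let ε, R > 0 and t, T ≥ 0 be real numbers, and let x ∈ X with d(x, r(T)) ≤ R. Suppose there is a geodesic σ : [0,1] → X from o to x which avoids the open ball of radius ε around r(t), i.e. d(σ(s), r(t)) ≥ ε for all s ∈ [0,1]. Then T − t ≤ (t/ε + 1)·R. -/

import Mathlib

open Metric Real

/-- A geodesic from `x` to `y`, parametrized affinely on `[0,1]`. -/
def IsGeodesic {X : Type*} [MetricSpace X] (σ : ℝ → X) (x y : X) : Prop :=
  σ 0 = x ∧ σ 1 = y ∧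
    ∀ s ∈ Set.Icc (0:ℝ) 1, ∀ t ∈ Set.Icc (0:ℝ) 1,
      dist (σ s) (σ t) = |s - t| * dist x y

/-- A geodesic space: every pair of points is joined by a geodesic. -/
def GeodesicMetricSpace (X : Type*) [MetricSpace X] : Prop :=
  ∀ x y : X, ∃ σ : ℝ → X, IsGeodesic σ x y

/-- The comparison point at parameter `s` on the Euclidean segment from `p` to `q`. -/
noncomputable def cmpPt (p q : EuclideanSpace ℝ (Fin 2)) (s : ℝ) : EuclideanSpace ℝ (Fin 2) :=
  p + s • (q - p)

/-- A CAT(0) space: a geodesic space in which every geodesic triangle satisfies the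
CAT(0) comparison inequality with respect to the Euclidean plane. -/
def IsCAT0 (X : Type*) [MetricSpace X] : Prop :=
  GeodesicMetricSpace X ∧
    ∀ (p q r : X) (σpq σqr σrp : ℝ → X),
      IsGeodesic σpq p q → IsGeodesic σqr q r → IsGeodesic σrp r p →
      ∀ p' q' r' : EuclideanSpace ℝ (Fin 2),
        dist p' q' = dist p q → dist q' r' = dist q r → dist r' p' = dist r p →
        ∀ (i j : Fin 3), ∀ s ∈ Set.Icc (0:ℝ) 1, ∀ t ∈ Set.Icc (0:ℝ) 1,
          dist (![σpq, σqr, σrp] i s) (![σpq, σqr, σrp] j t) ≤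
            dist (![cmpPt p' q', cmpPt q' r', cmpPt r' p'] i s)
                 (![cmpPt p' q', cmpPt q' r', cmpPt r' p'] j t)

/-- `z` is a CAT(-1) point of radius `c > 0`: every geodesic triangle contained in the
open ball `B(z, c)` admits a comparison triangle in the hyperbolic plane `ℍ²` (the upper
half-plane) for which the CAT(-1) comparison inequality holds. -/
def IsCATm1Point {X : Type*} [MetricSpace X] (z : X) (c : ℝ) : Prop :=
  0 < c ∧
    ∀ (p q r : X) (σpq σqr σrp : ℝ → X),
      IsGeodesic σpq p q → IsGeodesic σqr q r → IsGeodesic σrp r p →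
      (∀ s ∈ Set.Icc (0:ℝ) 1, σpq s ∈ Metric.ball z c) →
      (∀ s ∈ Set.Icc (0:ℝ) 1, σqr s ∈ Metric.ball z c) →
      (∀ s ∈ Set.Icc (0:ℝ) 1, σrp s ∈ Metric.ball z c) →
      ∃ (p' q' r' : UpperHalfPlane) (τpq τqr τrp : ℝ → UpperHalfPlane),
        IsGeodesic τpq p' q' ∧ IsGeodesic τqr q' r' ∧ IsGeodesic τrp r' p' ∧
        dist p' q' = dist p q ∧ dist q' r' = dist q r ∧ dist r' p' = dist r p ∧
        ∀ (i j : Fin 3), ∀ s ∈ Set.Icc (0:ℝ) 1, ∀ t ∈ Set.Icc (0:ℝ) 1,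
          dist (![σpq, σqr, σrp] i s) (![σpq, σqr, σrp] j t) ≤
            dist (![τpq, τqr, τrp] i s) (![τpq, τqr, τrp] j t)

/-- A geodesic ray: an isometric embedding of `[0, ∞)`. -/
def IsGeodesicRay {X : Type*} [MetricSpace X] (r : ℝ → X) : Prop :=
  ∀ s t : ℝ, 0 ≤ s → 0 ≤ t → dist (r s) (r t) = |s - t|

/-- A geodesic line: an isometric embedding of `ℝ`. -/
def IsGeodesicLine {X : Type*} [MetricSpace X] (γ : ℝ → X) : Prop :=
  ∀ s t : ℝ, dist (γ s) (γ t) = |s - t|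

/-- Geodesic completeness: every nondegenerate geodesic segment extends to a geodesic line. -/
def GeodesicallyComplete (X : Type*) [MetricSpace X] : Prop :=
  ∀ (x y : X) (σ : ℝ → X), IsGeodesic σ x y → x ≠ y →
    ∃ γ : ℝ → X, IsGeodesicLine γ ∧ ∀ s ∈ Set.Icc (0:ℝ) 1, σ s = γ (s * dist x y)

/-- Cocompactness: some compact set meets every orbit of the isometry group. -/
def Cocompact (X : Type*) [MetricSpace X] : Prop :=
  ∃ K : Set X, IsCompact K ∧ ∀ x : X, ∃ g : X ≃ᵢ X, g x ∈ K

/-- The set of projections of a point `u` onto a subset `Y`. -/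
def projSet {X : Type*} [MetricSpace X] (Y : Set X) (u : X) : Set X :=
  {p ∈ Y | dist u p = Metric.infDist u Y}

/-- `Y` is `B`-contracting: projections of balls disjoint from `Y` have diameter at most `B`. -/
def IsContracting {X : Type*} [MetricSpace X] (Y : Set X) (B : ℝ) : Prop :=
  0 ≤ B ∧
    ∀ (u : X) (ρ : ℝ), Disjoint (Metric.ball u ρ) Y →
      ∀ p q : X, (∃ v ∈ Metric.ball u ρ, p ∈ projSet Y v) →
        (∃ v ∈ Metric.ball u ρ, q ∈ projSet Y v) → dist p q ≤ B

noncomputable def pt2 (u v : ℝ) : EuclideanSpace ℝ (Fin 2) :=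
  (WithLp.equiv 2 (Fin 2 → ℝ)).symm ![u, v]

lemma pt2_dist (u v u' v' : ℝ) :
    dist (pt2 u v) (pt2 u' v') = Real.sqrt ((u - u')^2 + (v - v')^2) := by
  simp [pt2, EuclideanSpace.dist_eq, Fin.sum_univ_two, Real.dist_eq, sq_abs]

lemma exists_cmp_triangle (a b c : ℝ) (ha : 0 ≤ a) (hb : 0 ≤ b) (hc : 0 ≤ c)
    (h1 : b ≤ a + c) (h2 : c ≤ a + b) (h3 : a ≤ b + c) :
    ∃ p q r : EuclideanSpace ℝ (Fin 2), dist p q = a ∧ dist q r = b ∧ dist r p = c := by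
  rcases eq_or_lt_of_le ha with ha0 | ha0
  · have hbc : b = c := le_antisymm (by linarith) (by linarith)
    refine ⟨pt2 0 0, pt2 0 0, pt2 b 0, ?_, ?_, ?_⟩
    · rw [pt2_dist, show (0-0:ℝ)^2 + (0-0:ℝ)^2 = 0 by ring, Real.sqrt_zero, ha0]
    · rw [pt2_dist, show (0 - b)^2 + (0-0:ℝ)^2 = b^2 by ring, Real.sqrt_sq hb]
    · rw [pt2_dist, show (b - 0)^2 + (0-0:ℝ)^2 = b^2 by ring, Real.sqrt_sq hb, hbc]
  · set u := (a^2 + c^2 - b^2) / (2*a) with hu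
    have hcu : 0 ≤ c^2 - u^2 := by
      rw [hu, div_pow, sub_nonneg, div_le_iff₀ (by positivity)]
      have hA : (0:ℝ) ≤ (a + c - b) * (a + c + b) :=
        mul_nonneg (by linarith) (by linarith)
      have hB : (0:ℝ) ≤ (b - a + c) * (b + a - c) :=
        mul_nonneg (by linarith) (by linarith)
      nlinarith [mul_nonneg hA hB]
    set v := Real.sqrt (c^2 - u^2) with hv
    have hv2 : v^2 = c^2 - u^2 := Real.sq_sqrt hcu
    refine ⟨pt2 0 0, pt2 a 0, pt2 u v, ?_, ?_, ?_⟩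
    · rw [pt2_dist, show (0-a)^2 + (0-0:ℝ)^2 = a^2 by ring, Real.sqrt_sq ha]
    · rw [pt2_dist]
      have : (a - u)^2 + (0 - v)^2 = b^2 := by
        have h2au : 2 * a * u = a^2 + c^2 - b^2 := by
          rw [hu]; field_simp
        nlinarith [hv2]
      rw [this, Real.sqrt_sq hb]
    · rw [pt2_dist]
      have : (u - 0)^2 + (v - 0)^2 = c^2 := by nlinarith [hv2]
      rw [this, Real.sqrt_sq hc]

lemma cmpPt_dist (p' q' r' : EuclideanSpace ℝ (Fin 2)) (s : ℝ) :
    dist (cmpPt p' q' (1 - s)) (cmpPt q' r' s) = |s| * dist p' r' := by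
  have h : cmpPt p' q' (1 - s) - cmpPt q' r' s = s • (p' - r') := by
    simp only [cmpPt, smul_sub, sub_smul, one_smul]
    abel
  rw [dist_eq_norm, h, norm_smul, Real.norm_eq_abs, dist_eq_norm]

/-- distance bound at the beginning of the proof of Lemma 3.4. If a
geodesic from `o = r 0` to a point `x` with `d(x, r T) ≤ R` avoids the open ball of
radius `ε` around `r t`, then `T − t ≤ (t/ε + 1)·R`. -/
theorem dist_bound_of_geodesic_avoiding_ball
    (X : Type*) [MetricSpace X] (hCAT0 : IsCAT0 X)
    (r : ℝ → X) (hr : IsGeodesicRay r) (o : X) (ho : o = r 0)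
    (ε R : ℝ) (hε : 0 < ε) (hR : 0 < R)
    (t T : ℝ) (ht : 0 ≤ t) (hT : 0 ≤ T)
    (x : X) (hx : dist x (r T) ≤ R)
    (σ : ℝ → X) (hσ : IsGeodesic σ o x)
    (havoid : ∀ s ∈ Set.Icc (0:ℝ) 1, ε ≤ dist (σ s) (r t)) :
    T - t ≤ (t / ε + 1) * R := by
  obtain ⟨hσ0, hσ1, hσd⟩ := hσ
  -- t must be positive
  have ht0 : 0 < t := by
    rcases eq_or_lt_of_le ht with h | h
    · exfalso
      have := havoid 0 ⟨le_rfl, zero_le_one⟩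
      rw [hσ0, ho, ← h] at this
      simp at this
      linarith
    · exact h
  rcases le_or_gt T t with hTt | hTt
  · have : 0 ≤ (t / ε + 1) * R := by positivity
    linarith
  -- now t < T, so 0 < T
  have hT0 : 0 < T := ht0.trans hTt
  obtain ⟨hgeo, hcomp⟩ := hCAT0
  set y := r T with hy
  have hb : dist o y = T := by
    rw [ho, hy, hr 0 T le_rfl hT]
    rw [abs_of_nonpos (by linarith)]; ring
  -- reversed geodesic from x to o
  have hσpq : IsGeodesic (fun u => σ (1 - u)) x o := by
    refine ⟨by simpa using hσ1, by simpa using hσ0, ?_⟩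
    intro s hs u hu
    have h := hσd (1 - s) ⟨by linarith [hs.2], by linarith [hs.1]⟩
      (1 - u) ⟨by linarith [hu.2], by linarith [hu.1]⟩
    simp only [] at h ⊢
    rw [h, show (1 - s) - (1 - u) = u - s by ring, abs_sub_comm, dist_comm]
  -- geodesic from o to y along the ray
  have hσqr : IsGeodesic (fun u => r (u * T)) o y := by
    refine ⟨by simpa using ho.symm, by simp [hy], ?_⟩
    intro s hs u hu
    have h := hr (s * T) (u * T) (mul_nonneg hs.1 hT) (mul_nonneg hu.1 hT)
    simp only [] at h ⊢
    rw [h, hb, show s * T - u * T = (s - u) * T by ring, abs_mul,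
      abs_of_nonneg hT]
  obtain ⟨σrp, hσrp⟩ := hgeo y x
  obtain ⟨p', q', r', hpq, hqr, hrp⟩ :=
    exists_cmp_triangle (dist x o) (dist o y) (dist y x)
      dist_nonneg dist_nonneg dist_nonneg
      (by rw [dist_comm x o, dist_comm y x]; exact dist_triangle o x y)
      (by rw [dist_comm x o, dist_comm o y]; linarith [dist_triangle y o x])
      (by rw [dist_comm o y, dist_comm y x]; linarith [dist_triangle x y o])
  set s₀ : ℝ := t / T with hs₀
  have hs₀mem : s₀ ∈ Set.Icc (0:ℝ) 1 :=
    ⟨div_nonneg ht hT, (div_le_one hT0).mpr hTt.le⟩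
  have hs₀mem' : (1 - s₀) ∈ Set.Icc (0:ℝ) 1 :=
    ⟨by linarith [hs₀mem.2], by linarith [hs₀mem.1]⟩
  have key := hcomp x o y _ _ _ hσpq hσqr hσrp p' q' r' hpq hqr hrp
    0 1 (1 - s₀) hs₀mem' s₀ hs₀mem
  simp only [Matrix.cons_val_zero, Matrix.cons_val_one, Matrix.head_cons] at key
  rw [cmpPt_dist, abs_of_nonneg hs₀mem.1] at key
  have hval : σ (1 - (1 - s₀)) = σ s₀ := by norm_num
  have hrt : r (s₀ * T) = r t := by
    rw [hs₀, div_mul_cancel₀ _ (ne_of_gt hT0)]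
  rw [hval, hrt] at key
  -- combine with the avoidance hypothesis
  have hεle : ε ≤ s₀ * R := by
    have h1 := havoid s₀ hs₀mem
    have h2 : dist p' r' ≤ R := by
      rw [dist_comm p' r', hrp, dist_comm y x]; exact hx
    have := mul_le_mul_of_nonneg_left h2 hs₀mem.1
    linarith
  have hεT : ε * T ≤ t * R := by
    have := mul_le_mul_of_nonneg_right hεle hT0.le
    rw [hs₀] at this
    calc ε * T ≤ t / T * R * T := this
      _ = t * R := by field_simp
  have hTle : T ≤ t * R / ε := (le_div_iff₀ hε).mpr (by linarith)
  have hRHS : (t / ε + 1) * R = t * R / ε + R := by ring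
  linarith [hRHS ▸ le_refl ((t / ε + 1) * R)]
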